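/- Let H be a real Hilbert space with two norms: the ambient norm ‖·‖ and a weaker seminorm |·|. Let B be a bilinear form on H, bounded with constant M and coercive with constant α with respect to ‖·‖. Let V_h ⊆ H be a closed subspace, and let e = u − u_h where B[e, w_h] = 0 for all w_h ∈ V_h. Suppose for the dual problem: for each e there is ψ ∈ H with B[w, ψ] = ⟨e, w⟩ (the pairing realizing |e|² = ⟨e,e⟩) for all w ∈ H, and inf_{ψ_h ∈ V_h} ‖ψ − ψ_h‖ ≤ δ(e)·|e|. Then |e|² ≤ M·δ(e)·|e|·‖e‖, hence |e| ≤ M·δ(e)·‖e‖. -/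
import Mathlib


/-- Abstract Aubin–Nitsche duality argument: if `B` is bounded with constant
`M`, `e = u - u_h` satisfies Galerkin orthogonality, `ψ` solves the dual
problem `B[w, ψ] = ⟨e, w⟩` where the pairing realizes `|e|² = ⟨e, e⟩` for the
weaker seminorm `|·|`, and the dual solution is approximated to tolerance
`inf_{ψ_h ∈ V_h} ‖ψ - ψ_h‖ ≤ δ |e|`, then `|e|² ≤ M δ |e| ‖e‖`, hence
`|e| ≤ M δ ‖e‖`. -/
theorem aubin_nitsche_duality {H : Type*} [NormedAddCommGroup H]
    [InnerProductSpace ℝ H] [CompleteSpace H]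
    (B : H →ₗ[ℝ] H →ₗ[ℝ] ℝ) (M α : ℝ) (hα : 0 < α)
    (hbdd : ∀ v w : H, |B v w| ≤ M * ‖v‖ * ‖w‖)
    (hcoer : ∀ v : H, α * ‖v‖ ^ 2 ≤ B v v)
    (sem : H → ℝ) (hsem : ∀ x : H, 0 ≤ sem x)
    (P : H →ₗ[ℝ] H →ₗ[ℝ] ℝ)
    (Vh : Submodule ℝ H) (hVh : IsClosed (Vh : Set H))
    (u uh : H) (huh : uh ∈ Vh)
    (hGal : ∀ wh ∈ Vh, B (u - uh) wh = 0)
    (ψ : H) (hdual : ∀ w : H, B w ψ = P (u - uh) w)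
    (hpair : P (u - uh) (u - uh) = sem (u - uh) ^ 2)
    (δ : ℝ) (hδ : 0 ≤ δ)
    (happrox : ⨅ ψh : Vh, ‖ψ - (ψh : H)‖ ≤ δ * sem (u - uh)) :
    sem (u - uh) ^ 2 ≤ M * δ * sem (u - uh) * ‖u - uh‖ ∧
      sem (u - uh) ≤ M * δ * ‖u - uh‖ := by
  set e := u - uh with he
  by_cases hez : e = 0
  · have h0 : sem e ^ 2 = 0 := by rw [← hpair, hez]; simp
    have hsem0 : sem e = 0 := by nlinarith [hsem e]
    rw [hez] at hsem0
    constructor <;> simp [hez, hsem0]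
  · have hne : 0 < ‖e‖ := norm_pos_iff.mpr hez
    have hM : 0 < M := by
      have h1 := hcoer e
      have h2 := hbdd e e
      have hsq : ‖e‖ ^ 2 = ‖e‖ * ‖e‖ := sq ‖e‖
      nlinarith [le_abs_self (B e e), mul_pos hα (mul_pos hne hne)]
    have hbound : ∀ ψh : Vh, sem e ^ 2 ≤ M * ‖e‖ * ‖ψ - (ψh : H)‖ := by
      intro ψh
      have heq : B e (ψ - (ψh : H)) = sem e ^ 2 := by
        rw [map_sub, hGal ψh ψh.2, hdual e, hpair]; ring
      calc sem e ^ 2 = B e (ψ - (ψh : H)) := heq.symm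
        _ ≤ |B e (ψ - (ψh : H))| := le_abs_self _
        _ ≤ M * ‖e‖ * ‖ψ - (ψh : H)‖ := hbdd _ _
    have hpos : 0 < M * ‖e‖ := mul_pos hM hne
    have hinf : sem e ^ 2 / (M * ‖e‖) ≤ ⨅ ψh : Vh, ‖ψ - (ψh : H)‖ :=
      le_ciInf fun ψh => (div_le_iff₀ hpos).mpr (by linarith [hbound ψh, mul_comm (M * ‖e‖) ‖ψ - (ψh : H)‖])
    have hkey : sem e ^ 2 ≤ δ * sem e * (M * ‖e‖) :=
      (div_le_iff₀ hpos).mp (hinf.trans happrox)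
    have hsq : sem e ^ 2 ≤ M * δ * sem e * ‖e‖ := by nlinarith
    refine ⟨hsq, ?_⟩
    nlinarith [hsem e, mul_nonneg (mul_nonneg hM.le hδ) (norm_nonneg e)]
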